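/- Let n ≥ 2 and let M be a swap Kripke pre-model for C_nᴰ whose valuations satisfy the restrictions (i) v^n_w(α) = t^n_0 implies v^n_w(α ∧ ¬α) = T_n and (ii) for 1 ≤ k ≤ n−1, v^n_w(α) = t^n_k implies v^n_w(α ∧ ¬α) ∈ I_n and v^n_w(α¹) = t^n_{k−1}. Then for every world w and every formula α: v^n_w(α^{(n)}) ∈ D_n if and only if v^n_w(α) ∈ Boo_n. -/
import Mathlib


/-- Formulas over the signature Σ₁ᴰ = {∧, ∨, →, ¬, O}, with countably many
propositional variables. -/
inductive Form : Type
  | var : ℕ → Form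
  | and : Form → Form → Form
  | or : Form → Form → Form
  | imp : Form → Form → Form
  | neg : Form → Form
  | obl : Form → Form

namespace Form

/-- α⁰ = α, α^{k+1} = ¬(α^k ∧ ¬α^k). -/
def pow (α : Form) : ℕ → Form
  | 0 => α
  | k + 1 => ((α.pow k).and (α.pow k).neg).neg

/-- α^{(n)} = α¹ ∧ … ∧ αⁿ (for n ≥ 1). -/
def bigPow (α : Form) : ℕ → Form
  | 0 => α.pow 1
  | 1 => α.pow 1
  | m + 2 => (α.bigPow (m + 1)).and (α.pow (m + 2))

/-- ∼^{(n)}α := ¬α ∧ α^{(n)}. -/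
def snn (n : ℕ) (α : Form) : Form := α.neg.and (α.bigPow n)

end Form

/-- The n+2 snapshots of the swap structure for C_nᴰ: T_n, t^n_0, …, t^n_{n-1}, F_n. -/
inductive SVn (n : ℕ) : Type
  | T : SVn n
  | t : Fin n → SVn n
  | F : SVn n
deriving DecidableEq

namespace SVn

/-- The coordinates of a snapshot, as an element of 2^{n+1} (0-indexed):
T_n = (1,0,1,…,1), t^n_i has its unique 0 at (0-indexed) position i+2
(so t^n_{n-1} = (1,…,1)), and F_n = (0,1,…,1). -/
def coord {n : ℕ} : SVn n → Fin (n + 1) → Bool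
  | .T, j => decide (j.val ≠ 1)
  | .t i, j => decide (j.val ≠ i.val + 2)
  | .F, j => decide (j.val ≠ 0)

/-- First coordinate z₁. -/
def p1 {n : ℕ} (z : SVn n) : Bool := z.coord 0

/-- Second coordinate z₂. -/
def p2 {n : ℕ} (z : SVn n) : Bool := z.coord 1

/-- Designated values D_n = A_n ∖ {F_n}, i.e. first coordinate 1. -/
def desig {n : ℕ} (z : SVn n) : Prop := z.p1 = true

/-- Boolean values Boo_n = {T_n, F_n}. -/
def boo {n : ℕ} (z : SVn n) : Prop := z = SVn.T ∨ z = SVn.F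

/-- Inconsistent values I_n = A_n ∖ Boo_n. -/
def incons {n : ℕ} (z : SVn n) : Prop := ∃ i : Fin n, z = SVn.t i

end SVn

/-- Boolean implication a ⊃ b. -/
def boolImp (a b : Bool) : Bool := !a || b

/-- Membership of c in a #̃ b for a binary connective # with Boolean counterpart
`op`: c₁ = a₁ op b₁, and moreover c ∈ Boo_n whenever a, b ∈ Boo_n. -/
def opCond {n : ℕ} (op : Bool → Bool → Bool) (c a b : SVn n) : Prop :=
  c.p1 = op a.p1 b.p1 ∧ (a.boo → b.boo → c.boo)

/-- Swap Kripke pre-model conditions for C_nᴰ on a serial frame (W,R) with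
valuations v_w : Form → A_n. -/
structure IsPreModelCnD (n : ℕ) {W : Type} (R : W → W → Prop)
    (v : W → Form → SVn n) : Prop where
  serial : ∀ w, ∃ w', R w w'
  and_ : ∀ w α β, opCond (· && ·) (v w (α.and β)) (v w α) (v w β)
  or_ : ∀ w α β, opCond (· || ·) (v w (α.or β)) (v w α) (v w β)
  imp_ : ∀ w α β, opCond boolImp (v w (α.imp β)) (v w α) (v w β)
  neg_ : ∀ w α, (v w α.neg).p1 = (v w α).p2 ∧ (v w α.neg).p2 ≤ (v w α).p1
  obl_ : ∀ w α, ((v w α.obl).p1 = true ↔ ∀ w', R w w' → (v w' α).p1 = true)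

/-- The RNmatrix restrictions on valuations:
(i) v_w(α) = t^n_0 implies v_w(α ∧ ¬α) = T_n;
(ii) for 1 ≤ k ≤ n−1, v_w(α) = t^n_k implies v_w(α ∧ ¬α) ∈ I_n and
v_w(α¹) = t^n_{k−1}. -/
def RestrCnD (n : ℕ) {W : Type} (v : W → Form → SVn n) : Prop :=
  (∀ (w : W) (α : Form) (h0 : 0 < n),
      v w α = SVn.t ⟨0, h0⟩ → v w (α.and α.neg) = SVn.T) ∧
  (∀ (w : W) (α : Form) (k : ℕ) (hk : k < n), 1 ≤ k → v w α = SVn.t ⟨k, hk⟩ →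
      (v w (α.and α.neg)).incons ∧ v w (α.pow 1) = SVn.t ⟨k - 1, by omega⟩)

/-- A swap Kripke model for C_nᴰ: a pre-model satisfying the restrictions (i), (ii)
and (iii): v_w(α) ∈ Boo_n implies v_w(Oα) ∈ Boo_n. -/
structure IsModelCnD (n : ℕ) {W : Type} (R : W → W → Prop)
    (v : W → Form → SVn n) : Prop where
  pre : IsPreModelCnD n R v
  restr : RestrCnD n v
  booObl : ∀ w α, (v w α).boo → (v w α.obl).boo

namespace CnDAux

variable {n : ℕ}

lemma val_one (hn : 2 ≤ n) : ((1 : Fin (n + 1)) : ℕ) = 1 := by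
  rw [Fin.val_one']; exact Nat.mod_eq_of_lt (by omega)

lemma p1_T : (SVn.T : SVn n).p1 = true := by simp [SVn.p1, SVn.coord]

lemma p1_t (i : Fin n) : (SVn.t i : SVn n).p1 = true := by simp [SVn.p1, SVn.coord]

lemma p1_F : (SVn.F : SVn n).p1 = false := by simp [SVn.p1, SVn.coord]

lemma p2_T (hn : 2 ≤ n) : (SVn.T : SVn n).p2 = false := by
  have h : (SVn.T : SVn n).p2 = decide (((1 : Fin (n + 1)) : ℕ) ≠ 1) := rfl
  rw [h, val_one hn]; simp

lemma p2_t (hn : 2 ≤ n) (i : Fin n) : (SVn.t i : SVn n).p2 = true := by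
  have h : (SVn.t i : SVn n).p2 = decide (((1 : Fin (n + 1)) : ℕ) ≠ i.val + 2) := rfl
  rw [h, val_one hn]; simp

lemma p2_F (hn : 2 ≤ n) : (SVn.F : SVn n).p2 = true := by
  have h : (SVn.F : SVn n).p2 = decide (((1 : Fin (n + 1)) : ℕ) ≠ 0) := rfl
  rw [h, val_one hn]; simp

lemma eq_F_of_p1 (z : SVn n) (h : z.p1 = false) : z = SVn.F := by
  cases z with
  | T => rw [p1_T] at h; exact absurd h (by simp)
  | t i => rw [p1_t] at h; exact absurd h (by simp)
  | F => rfl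

lemma eq_T_of (hn : 2 ≤ n) (z : SVn n) (h1 : z.p1 = true) (h2 : z.p2 = false) :
    z = SVn.T := by
  cases z with
  | T => rfl
  | t i => rw [p2_t hn] at h2; exact absurd h2 (by simp)
  | F => rw [p1_F] at h1; exact absurd h1 (by simp)

variable {W : Type} {R : W → W → Prop} {v : W → Form → SVn n}

lemma pow1_T_of_andneg_F (hn : 2 ≤ n) (hM : IsPreModelCnD n R v) (w : W) (α : Form)
    (h : v w (α.and α.neg) = SVn.F) : v w (α.pow 1) = SVn.T := by
  have hneg := hM.neg_ w (α.and α.neg)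
  rw [h, p2_F hn, p1_F] at hneg
  have : v w ((α.and α.neg).neg) = SVn.T :=
    eq_T_of hn _ hneg.1 (by
      have h2 := hneg.2
      revert h2; cases (v w ((α.and α.neg).neg)).p2 <;> simp)
  exact this

lemma andneg_F_of_boo (hn : 2 ≤ n) (hM : IsPreModelCnD n R v) (w : W) (α : Form)
    (h : (v w α).boo) : v w (α.and α.neg) = SVn.F := by
  have hneg := hM.neg_ w α
  have hand := (hM.and_ w α α.neg).1
  apply eq_F_of_p1
  rw [hand]
  cases h with
  | inl h =>
    rw [h, p2_T hn] at hneg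
    rw [hneg.1, h]; simp
  | inr h =>
    rw [h, p1_F]; simp

lemma pow1_T_of_boo (hn : 2 ≤ n) (hM : IsPreModelCnD n R v) (w : W) (α : Form)
    (h : (v w α).boo) : v w (α.pow 1) = SVn.T :=
  pow1_T_of_andneg_F hn hM w α (andneg_F_of_boo hn hM w α h)

lemma pow_T_of_boo (hn : 2 ≤ n) (hM : IsPreModelCnD n R v) (w : W) (α : Form)
    (h : (v w α).boo) : ∀ k, 1 ≤ k → v w (α.pow k) = SVn.T := by
  intro k hk
  induction k with
  | zero => omega
  | succ k ih =>
    rcases Nat.eq_or_lt_of_le hk with h1 | h1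
    · rw [← h1] at *; exact pow1_T_of_boo hn hM w α h
    · have hprev : v w (α.pow k) = SVn.T := ih (by omega)
      have : v w ((α.pow k).pow 1) = SVn.T :=
        pow1_T_of_boo hn hM w (α.pow k) (by rw [hprev]; exact Or.inl rfl)
      exact this

lemma pow_pow1 (α : Form) : ∀ j, (α.pow 1).pow j = α.pow (j + 1) := by
  intro j
  induction j with
  | zero => rfl
  | succ j ih => show ((((α.pow 1).pow j).and _).neg) = _; rw [ih]; rfl

lemma pow1_F_of_t0 (hn : 2 ≤ n) (hM : IsPreModelCnD n R v) (hR : RestrCnD n v)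
    (w : W) (α : Form) (h : v w α = SVn.t ⟨0, by omega⟩) :
    v w (α.pow 1) = SVn.F := by
  have hand : v w (α.and α.neg) = SVn.T := hR.1 w α (by omega) h
  have hneg := hM.neg_ w (α.and α.neg)
  rw [hand, p2_T hn] at hneg
  exact eq_F_of_p1 _ hneg.1

lemma pow_F_of_t (hn : 2 ≤ n) (hM : IsPreModelCnD n R v) (hR : RestrCnD n v)
    (w : W) : ∀ k (hk : k < n) (α : Form), v w α = SVn.t ⟨k, hk⟩ →
      v w (α.pow (k + 1)) = SVn.F := by
  intro k
  induction k with
  | zero => intro hk α h; exact pow1_F_of_t0 hn hM hR w α h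
  | succ k ih =>
    intro hk α h
    have hstep := (hR.2 w α (k + 1) hk (by omega) h).2
    have : v w ((α.pow 1).pow (k + 1)) = SVn.F := ih (by omega) (α.pow 1) hstep
    rwa [pow_pow1] at this

lemma big_p1_true (hM : IsPreModelCnD n R v) (w : W) (α : Form) :
    ∀ m, 1 ≤ m → (∀ j, 1 ≤ j → j ≤ m → v w (α.pow j) = SVn.T) →
      (v w (α.bigPow m)).p1 = true := by
  intro m
  induction m using Nat.strong_induction_on with
  | _ m ih =>
    match m with
    | 0 => intro h; omega
    | 1 =>
      intro _ h
      have : v w (α.bigPow 1) = SVn.T := h 1 le_rfl le_rfl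
      rw [this]; exact p1_T
    | (m + 2) =>
      intro _ h
      have h1 : (v w (α.bigPow (m + 1))).p1 = true :=
        ih (m + 1) (by omega) (by omega) (fun j hj hj2 => h j hj (by omega))
      have h2 : v w (α.pow (m + 2)) = SVn.T := h (m + 2) (by omega) le_rfl
      have key : (v w (α.bigPow (m + 2))).p1 =
          ((v w (α.bigPow (m + 1))).p1 && (v w (α.pow (m + 2))).p1) :=
        (hM.and_ w (α.bigPow (m + 1)) (α.pow (m + 2))).1
      rw [key, h1, h2, p1_T]; rfl

lemma big_p1_false (hM : IsPreModelCnD n R v) (w : W) (α : Form) :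
    ∀ m j, 1 ≤ j → j ≤ m → (v w (α.pow j)).p1 = false →
      (v w (α.bigPow m)).p1 = false := by
  intro m
  induction m using Nat.strong_induction_on with
  | _ m ih =>
    match m with
    | 0 => intro j h1 h2; omega
    | 1 =>
      intro j h1 h2 h3
      have : j = 1 := by omega
      subst this; exact h3
    | (m + 2) =>
      intro j h1 h2 h3
      have key : (v w (α.bigPow (m + 2))).p1 =
          ((v w (α.bigPow (m + 1))).p1 && (v w (α.pow (m + 2))).p1) :=
        (hM.and_ w (α.bigPow (m + 1)) (α.pow (m + 2))).1
      rcases Nat.eq_or_lt_of_le h2 with he | hlt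
      · rw [key, ← he, h3]; simp
      · have := ih (m + 1) (by omega) j h1 (by omega) h3
        rw [key, this]; simp

end CnDAux

/-- In any swap Kripke pre-model for C_nᴰ (n ≥ 2) satisfying the restrictions
(i) and (ii): v^n_w(α^{(n)}) ∈ D_n iff v^n_w(α) ∈ Boo_n. -/
theorem CnD_bigPow_boo (n : ℕ) (hn : 2 ≤ n) {W : Type} (R : W → W → Prop)
    (v : W → Form → SVn n) (hM : IsPreModelCnD n R v) (hR : RestrCnD n v) :
    ∀ (w : W) (α : Form), (v w (α.bigPow n)).desig ↔ (v w α).boo := by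
  intro w α
  constructor
  · intro hdes
    by_contra hb
    cases hz : v w α with
    | T => exact hb (hz ▸ Or.inl rfl)
    | F => exact hb (hz ▸ Or.inr rfl)
    | t i =>
      have hF : v w (α.pow (i.val + 1)) = SVn.F :=
        CnDAux.pow_F_of_t hn hM hR w i.val i.isLt α (by rw [hz])
      have : (v w (α.bigPow n)).p1 = false :=
        CnDAux.big_p1_false hM w α n (i.val + 1) (by omega) (by omega)
          (by rw [hF]; exact CnDAux.p1_F)
      rw [SVn.desig, this] at hdes
      exact absurd hdes (by simp)
  · intro hb
    have : (v w (α.bigPow n)).p1 = true :=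
      CnDAux.big_p1_true hM w α n (by omega)
        (fun j hj _ => CnDAux.pow_T_of_boo hn hM w α hb j hj)
    exact this
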